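/- Let H be a separable real Hilbert space, let C ⊆ H be compact and convex with diam(C) > 0, let L > 0, let ρ : C → ℝ be convex and L-Lipschitz, and let ε > 0. Then there exist N, M ∈ ℕ, points ξ_1, …, ξ_N ∈ C, a finite-dimensional linear subspace V ⊆ H, and points p_1, …, p_M ∈ V with ‖p_m‖ ≤ L for every m, such that the map f : H → ℝ defined by f(x) = max_{1 ≤ m ≤ M} { ⟨p_m, x⟩ + min_{1 ≤ n ≤ N} ( ρ(ξ_n) − ⟨p_m, ξ_n⟩ ) } is convex, L-Lipschitz on all of H, and satisfies sup_{ξ ∈ C} | ρ(ξ) − f(ξ) | < ε. -/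

import Mathlib

open scoped RealInnerProductSpace

theorem exists_subgradient_aux
    {H : Type*} [NormedAddCommGroup H] [InnerProductSpace ℝ H] [CompleteSpace H]
    (g : H → ℝ) (L : ℝ) (hL : 0 ≤ L)
    (hconv : ConvexOn ℝ Set.univ g)
    (hlip : ∀ x z, |g x - g z| ≤ L * ‖x - z‖)
    (x₀ : H) :
    ∃ p : H, ‖p‖ ≤ L ∧ ∀ x, g x₀ + ⟪p, x - x₀⟫ ≤ g x := by
  have hgcont : Continuous g := by
    have : LipschitzWith L.toNNReal g := by
      apply LipschitzWith.of_dist_le_mul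
      intro x y
      rw [Real.dist_eq, dist_eq_norm]
      calc |g x - g y| ≤ L * ‖x - y‖ := hlip x y
        _ = L.toNNReal * ‖x - y‖ := by rw [Real.coe_toNNReal L hL]
    exact this.continuous
  set S : Set (H × ℝ) := {q : H × ℝ | g q.1 < q.2} with hS
  have hSopen : IsOpen S := by
    have : S = (fun q : H × ℝ => q.2 - g q.1) ⁻¹' Set.Ioi 0 := by
      ext q; simp [hS, sub_pos]
    rw [this]
    exact IsOpen.preimage (by fun_prop) isOpen_Ioi
  have hSconv : Convex ℝ S := by
    rintro ⟨x1, t1⟩ h1 ⟨x2, t2⟩ h2 a b ha hb hab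
    simp only [hS, Set.mem_setOf_eq] at h1 h2 ⊢
    calc g (a • x1 + b • x2) ≤ a * g x1 + b * g x2 :=
          hconv.2 (Set.mem_univ x1) (Set.mem_univ x2) ha hb hab
      _ < a * t1 + b * t2 := by
          rcases eq_or_lt_of_le ha with h | h
          · have ha0 : a = 0 := h.symm
            have hb1 : b = 1 := by linarith
            rw [ha0, hb1]; simpa using h2
          · have h2' := mul_le_mul_of_nonneg_left h2.le hb
            have h1' := mul_lt_mul_of_pos_left h1 h
            linarith
  have hx₀ : (x₀, g x₀) ∉ S := by simp [hS]
  obtain ⟨φ, hφ⟩ := geometric_hahn_banach_open_point hSconv hSopen hx₀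
  set c : ℝ := φ (0, 1) with hc
  have hφsplit : ∀ x : H, ∀ t : ℝ, φ (x, t) = φ (x, 0) + t * c := by
    intro x t
    have : (x, t) = (x, (0:ℝ)) + t • ((0:H), (1:ℝ)) := by
      simp [Prod.ext_iff]
    rw [this, map_add, map_smul]
    simp [hc, smul_eq_mul]
  have hcneg : c < 0 := by
    have h1 := hφ (x₀, g x₀ + 1) (by simp [hS])
    rw [hφsplit x₀ (g x₀ + 1), hφsplit x₀ (g x₀)] at h1
    linarith
  have key : ∀ x : H, φ (x, 0) + g x * c ≤ φ (x₀, 0) + g x₀ * c := by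
    intro x
    have hx0 : φ (x₀, g x₀) = φ (x₀, 0) + g x₀ * c := hφsplit x₀ (g x₀)
    have hstep : ∀ s : ℝ, 0 < s → φ (x, 0) + (g x + s) * c < φ (x₀, 0) + g x₀ * c := by
      intro s hs
      have hmem : (x, g x + s) ∈ S := by simp [hS]; linarith
      have h5 := hφ _ hmem
      rw [hφsplit x (g x + s), hx0] at h5
      exact h5
    by_contra hcon
    push_neg at hcon
    set δ := (φ (x, 0) + g x * c) - (φ (x₀, 0) + g x₀ * c) with hδ
    have hδpos : 0 < δ := by linarith
    have hcp : (0:ℝ) < -c := by linarith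
    have hinv : 0 < (-c)⁻¹ := inv_pos.mpr hcp
    have h2 := hstep (δ / 2 * (-c)⁻¹) (by positivity)
    have h3 : (-c)⁻¹ * c = -1 := by rw [inv_neg, neg_mul, inv_mul_cancel₀ hcneg.ne]
    have h4 : (g x + δ / 2 * (-c)⁻¹) * c = g x * c - δ / 2 := by
      linear_combination (δ / 2) * h3
    rw [h4] at h2
    linarith
  set ψ : H →L[ℝ] ℝ := (-c)⁻¹ • ((ContinuousLinearMap.comp φ (ContinuousLinearMap.inl ℝ H ℝ))) with hψ
  set p : H := (InnerProductSpace.toDual ℝ H).symm ψ with hp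
  have hpinner : ∀ x : H, ⟪p, x⟫ = (-c)⁻¹ * φ (x, 0) := by
    intro x
    rw [hp]
    rw [InnerProductSpace.toDual_symm_apply]
    simp [hψ, smul_eq_mul]
  have hsub : ∀ x, g x₀ + ⟪p, x - x₀⟫ ≤ g x := by
    intro x
    have h := key x
    have hcp : (0:ℝ) < -c := by linarith
    have hne : (-c) ≠ 0 := ne_of_gt hcp
    rw [inner_sub_right, hpinner, hpinner]
    have h2 : φ (x, 0) - φ (x₀, 0) ≤ (g x - g x₀) * (-c) := by nlinarith [h]
    have h3 := mul_le_mul_of_nonneg_right h2 (inv_pos.mpr hcp).le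
    rw [mul_inv_cancel_right₀ hne] at h3
    nlinarith [h3]
  refine ⟨p, ?_, hsub⟩
  rcases eq_or_lt_of_le (norm_nonneg p) with h0 | h0
  · rw [← h0]; exact hL
  · have := hsub (x₀ + p)
    have h1 : ⟪p, (x₀ + p) - x₀⟫ = ‖p‖^2 := by
      simp [real_inner_self_eq_norm_sq]
    have h2 : g (x₀ + p) - g x₀ ≤ L * ‖p‖ := by
      have := hlip (x₀ + p) x₀
      have h3 : ‖x₀ + p - x₀‖ = ‖p‖ := by simp
      rw [h3] at this
      exact (abs_le.mp this).2
    nlinarith [sq_nonneg ‖p‖]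


theorem exists_extension_aux
    {H : Type*} [NormedAddCommGroup H] [InnerProductSpace ℝ H]
    (C : Set H) (hCne : C.Nonempty) (hCconv : Convex ℝ C)
    (L : ℝ) (hL : 0 ≤ L) (ρ : H → ℝ)
    (hρconv : ∀ x ∈ C, ∀ y ∈ C, ∀ t : ℝ, 0 ≤ t → t ≤ 1 →
      ρ (t • x + (1 - t) • y) ≤ t * ρ x + (1 - t) * ρ y)
    (hρlip : ∀ x ∈ C, ∀ y ∈ C, |ρ x - ρ y| ≤ L * ‖x - y‖) :
    ∃ g : H → ℝ, ConvexOn ℝ Set.univ g ∧ (∀ x z, |g x - g z| ≤ L * ‖x - z‖)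
      ∧ ∀ x ∈ C, g x = ρ x := by
  obtain ⟨y₀, hy₀⟩ := hCne
  set g : H → ℝ := fun x => sInf ((fun y => ρ y + L * ‖x - y‖) '' C) with hg
  have hne : ∀ x : H, ((fun y => ρ y + L * ‖x - y‖) '' C).Nonempty :=
    fun x => ⟨_, ⟨y₀, hy₀, rfl⟩⟩
  have hbdd : ∀ x : H, BddBelow ((fun y => ρ y + L * ‖x - y‖) '' C) := by
    intro x
    refine ⟨ρ y₀ - L * ‖x - y₀‖, ?_⟩
    rintro v ⟨y, hy, rfl⟩
    have h1 : |ρ y₀ - ρ y| ≤ L * ‖y₀ - y‖ := hρlip y₀ hy₀ y hy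
    have h2 : ‖y₀ - y‖ ≤ ‖x - y₀‖ + ‖x - y‖ := by
      have := norm_sub_le (x - y) (x - y₀)
      simp only [sub_sub_sub_cancel_left] at this
      calc ‖y₀ - y‖ = ‖(x - y) - (x - y₀)‖ := by rw [sub_sub_sub_cancel_left]
        _ ≤ ‖x - y‖ + ‖x - y₀‖ := norm_sub_le _ _
        _ = ‖x - y₀‖ + ‖x - y‖ := by ring
    have h3 : ρ y₀ - ρ y ≤ L * (‖x - y₀‖ + ‖x - y‖) :=
      le_trans (abs_le.mp h1).2 (mul_le_mul_of_nonneg_left h2 hL)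
    show ρ y₀ - L * ‖x - y₀‖ ≤ ρ y + L * ‖x - y‖
    nlinarith
  have gle : ∀ x : H, ∀ y ∈ C, g x ≤ ρ y + L * ‖x - y‖ := by
    intro x y hy
    exact csInf_le (hbdd x) ⟨y, hy, rfl⟩
  have gge : ∀ (x : H) (b : ℝ), (∀ y ∈ C, b ≤ ρ y + L * ‖x - y‖) → b ≤ g x := by
    intro x b hb
    exact le_csInf (hne x) (by rintro v ⟨y, hy, rfl⟩; exact hb y hy)
  have heq : ∀ x ∈ C, g x = ρ x := by
    intro x hx
    refine le_antisymm ?_ ?_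
    · have := gle x x hx; simpa using this
    · refine gge x (ρ x) (fun y hy => ?_)
      have := (abs_le.mp (hρlip x hx y hy)).2
      linarith
  have hlip : ∀ x z : H, |g x - g z| ≤ L * ‖x - z‖ := by
    have half : ∀ x z : H, g x - g z ≤ L * ‖x - z‖ := by
      intro x z
      have : g x - L * ‖x - z‖ ≤ g z := by
        refine gge z _ (fun y hy => ?_)
        have h1 : g x ≤ ρ y + L * ‖x - y‖ := gle x y hy
        have h2 : ‖x - y‖ ≤ ‖x - z‖ + ‖z - y‖ := by
          calc ‖x - y‖ = ‖(x - z) + (z - y)‖ := by abel_nf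
            _ ≤ ‖x - z‖ + ‖z - y‖ := norm_add_le _ _
        nlinarith
      linarith
    intro x z
    rw [abs_sub_le_iff]
    refine ⟨half x z, ?_⟩
    rw [norm_sub_rev]
    exact half z x
  have hconv : ConvexOn ℝ Set.univ g := by
    refine ⟨convex_univ, ?_⟩
    intro x _ z _ a b ha hb hab
    simp only [smul_eq_mul]
    refine le_of_forall_pos_le_add ?_
    intro ε hε
    obtain ⟨v1, ⟨y1, hy1, rfl⟩, hv1⟩ :=
      exists_lt_of_csInf_lt (hne x) (show g x < g x + ε by linarith)
    obtain ⟨v2, ⟨y2, hy2, rfl⟩, hv2⟩ :=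
      exists_lt_of_csInf_lt (hne z) (show g z < g z + ε by linarith)
    have hyC : a • y1 + b • y2 ∈ C := hCconv hy1 hy2 ha hb hab
    have hb' : b = 1 - a := by linarith
    have step1 : g (a • x + b • z) ≤ ρ (a • y1 + b • y2) + L * ‖(a • x + b • z) - (a • y1 + b • y2)‖ :=
      gle _ _ hyC
    have step2 : ρ (a • y1 + b • y2) ≤ a * ρ y1 + b * ρ y2 := by
      rw [hb']
      exact hρconv y1 hy1 y2 hy2 a ha (by linarith)
    have step3 : ‖(a • x + b • z) - (a • y1 + b • y2)‖ ≤ a * ‖x - y1‖ + b * ‖z - y2‖ := by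
      have : (a • x + b • z) - (a • y1 + b • y2) = a • (x - y1) + b • (z - y2) := by
        module
      rw [this]
      calc ‖a • (x - y1) + b • (z - y2)‖ ≤ ‖a • (x - y1)‖ + ‖b • (z - y2)‖ := norm_add_le _ _
        _ = a * ‖x - y1‖ + b * ‖z - y2‖ := by
            rw [norm_smul, norm_smul, Real.norm_eq_abs, Real.norm_eq_abs,
              abs_of_nonneg ha, abs_of_nonneg hb]
    have h1 : a * (ρ y1 + L * ‖x - y1‖) ≤ a * (g x + ε) :=
      mul_le_mul_of_nonneg_left hv1.le ha
    have h2 : b * (ρ y2 + L * ‖z - y2‖) ≤ b * (g z + ε) :=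
      mul_le_mul_of_nonneg_left hv2.le hb
    have hLs : L * (a * ‖x - y1‖ + b * ‖z - y2‖) ≥ L * ‖(a • x + b • z) - (a • y1 + b • y2)‖ :=
      mul_le_mul_of_nonneg_left step3 hL
    nlinarith [mul_le_mul_of_nonneg_left hv1.le ha, mul_le_mul_of_nonneg_left hv2.le hb]
  exact ⟨g, hconv, hlip, heq⟩

/-- reconstruction theorem.  Every convex `L`-Lipschitz
functional on a compact convex subset of a separable real Hilbert space can be
uniformly `ε`-approximated by an explicit finite max-min formula which is
convex and `L`-Lipschitz on all of `H`, built from finitely many sample points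
in `C` and finitely many directions in a finite-dimensional subspace with
norms at most `L`. -/
theorem convex_functional_reconstruction
    {H : Type*} [NormedAddCommGroup H] [InnerProductSpace ℝ H] [CompleteSpace H]
    [TopologicalSpace.SeparableSpace H]
    (C : Set H) (hCcpt : IsCompact C) (hCconv : Convex ℝ C)
    (hCdiam : 0 < Metric.diam C)
    (L : ℝ) (hL : 0 < L) (ρ : H → ℝ)
    (hρconv : ∀ x ∈ C, ∀ y ∈ C, ∀ t : ℝ, 0 ≤ t → t ≤ 1 →
      ρ (t • x + (1 - t) • y) ≤ t * ρ x + (1 - t) * ρ y)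
    (hρlip : ∀ x ∈ C, ∀ y ∈ C, |ρ x - ρ y| ≤ L * ‖x - y‖)
    (ε : ℝ) (hε : 0 < ε) :
    ∃ (N M : ℕ) (ξ : Fin N → H) (V : Submodule ℝ H)
      (_ : FiniteDimensional ℝ V) (p : Fin M → H) (f : H → ℝ),
      0 < N ∧ 0 < M ∧
      (∀ n, ξ n ∈ C) ∧
      (∀ m, p m ∈ V ∧ ‖p m‖ ≤ L) ∧
      (∀ x, f x = ⨆ m : Fin M,
        (⟪p m, x⟫ + ⨅ n : Fin N, (ρ (ξ n) - ⟪p m, ξ n⟫))) ∧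
      (∀ x z : H, ∀ t : ℝ, 0 ≤ t → t ≤ 1 →
        f (t • x + (1 - t) • z) ≤ t * f x + (1 - t) * f z) ∧
      (∀ x z : H, |f x - f z| ≤ L * ‖x - z‖) ∧
      sSup ((fun x => |ρ x - f x|) '' C) < ε := by
  -- C is nonempty
  have hCne : C.Nonempty := by
    rcases C.eq_empty_or_nonempty with h | h
    · rw [h] at hCdiam; simp [Metric.diam_empty] at hCdiam
    · exact h
  -- global extension g
  obtain ⟨g, hgconv, hglip, hgeq⟩ :=
    exists_extension_aux C hCne hCconv L hL.le ρ hρconv hρlip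
  -- the net
  set δ : ℝ := ε / (4 * L) with hδ
  have hδpos : 0 < δ := by positivity
  obtain ⟨t, htC, htfin, htcover⟩ := hCcpt.finite_cover_balls hδpos
  have htne : t.Nonempty := by
    rcases t.eq_empty_or_nonempty with h | h
    · exfalso
      obtain ⟨x, hx⟩ := hCne
      have := htcover hx
      simp [h] at this
    · exact h
  set N : ℕ := htfin.toFinset.card with hN
  have hNpos : 0 < N := by
    rw [hN, Finset.card_pos, Set.Finite.toFinset_nonempty]
    exact htne
  haveI : Nonempty (Fin N) := Fin.pos_iff_nonempty.mp hNpos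
  set ξ : Fin N → H := fun n => ((htfin.toFinset.equivFin.symm n : htfin.toFinset) : H) with hξ
  have hξC : ∀ n, ξ n ∈ C := by
    intro n
    apply htC
    have := (htfin.toFinset.equivFin.symm n).2
    rwa [Set.Finite.mem_toFinset] at this
  have hξnet : ∀ x ∈ C, ∃ n, ‖x - ξ n‖ < δ := by
    intro x hx
    have := htcover hx
    simp only [Set.mem_iUnion, Metric.mem_ball] at this
    obtain ⟨y, hy, hxy⟩ := this
    have hy' : y ∈ htfin.toFinset := (Set.Finite.mem_toFinset _).mpr hy
    refine ⟨htfin.toFinset.equivFin ⟨y, hy'⟩, ?_⟩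
    have : ξ (htfin.toFinset.equivFin ⟨y, hy'⟩) = y := by
      simp [hξ]
    rw [this, ← dist_eq_norm]
    exact hxy
  -- the subspace
  set V : Submodule ℝ H := Submodule.span ℝ (Set.range ξ) with hV
  haveI hVfd : FiniteDimensional ℝ V :=
    FiniteDimensional.span_of_finite ℝ (Set.finite_range ξ)
  have hξV : ∀ n, ξ n ∈ V := fun n => Submodule.subset_span (Set.mem_range_self n)
  -- subgradients
  have hsub : ∀ m : Fin N, ∃ p : H, ‖p‖ ≤ L ∧ ∀ x, g (ξ m) + ⟪p, x - ξ m⟫ ≤ g x :=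
    fun m => exists_subgradient_aux g L hL.le hgconv hglip (ξ m)
  choose p₀ hp₀norm hp₀sub using hsub
  -- project onto V
  set q : Fin N → H := fun m => (Submodule.orthogonalProjectionOnto V (p₀ m) : H) with hq
  have hqV : ∀ m, q m ∈ V := fun m => (Submodule.orthogonalProjectionOnto V (p₀ m)).2
  have hqnorm : ∀ m, ‖q m‖ ≤ L := by
    intro m
    have h1 : ‖Submodule.orthogonalProjectionOnto V (p₀ m)‖ ≤ ‖Submodule.orthogonalProjectionOnto V‖ * ‖p₀ m‖ :=
      (Submodule.orthogonalProjectionOnto V).le_opNorm (p₀ m)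
    have h2 : ‖Submodule.orthogonalProjectionOnto V‖ ≤ 1 := Submodule.orthogonalProjectionOnto_norm_le V
    have h3 : ‖Submodule.orthogonalProjectionOnto V‖ * ‖p₀ m‖ ≤ 1 * ‖p₀ m‖ :=
      mul_le_mul_of_nonneg_right h2 (norm_nonneg _)
    calc ‖q m‖ = ‖Submodule.orthogonalProjectionOnto V (p₀ m)‖ := rfl
      _ ≤ ‖p₀ m‖ := by rw [one_mul] at h3; exact le_trans h1 h3
      _ ≤ L := hp₀norm m
  have hqinner : ∀ m, ∀ v ∈ V, ⟪q m, v⟫ = ⟪p₀ m, v⟫ := by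
    intro m v hv
    have horth : p₀ m - q m ∈ Vᗮ := Submodule.sub_starProjection_mem_orthogonal (K := V) (p₀ m)
    have h0 := horth v hv
    rw [inner_sub_right] at h0
    have e1 := real_inner_comm v (q m)
    have e2 := real_inner_comm v (p₀ m)
    linarith
  -- key inequality at the net points
  have hkey : ∀ m n : Fin N, ρ (ξ m) + ⟪q m, ξ n⟫ - ⟪q m, ξ m⟫ ≤ ρ (ξ n) := by
    intro m n
    have h1 := hp₀sub m (ξ n)
    rw [hgeq _ (hξC m), hgeq _ (hξC n)] at h1
    have h2 : ⟪q m, ξ n - ξ m⟫ = ⟪p₀ m, ξ n - ξ m⟫ :=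
      hqinner m _ (Submodule.sub_mem V (hξV n) (hξV m))
    rw [inner_sub_right, inner_sub_right] at h2
    rw [inner_sub_right] at h1
    linarith
  -- the constants and f
  set c : Fin N → ℝ := fun m => ⨅ n, (ρ (ξ n) - ⟪q m, ξ n⟫) with hc
  set f : H → ℝ := fun x => ⨆ m, (⟪q m, x⟫ + c m) with hf
  have hbddc : ∀ m, BddBelow (Set.range fun n => ρ (ξ n) - ⟪q m, ξ n⟫) :=
    fun m => Set.Finite.bddBelow (Set.finite_range _)
  have hceq : ∀ m, c m = ρ (ξ m) - ⟪q m, ξ m⟫ := by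
    intro m
    refine le_antisymm (ciInf_le (hbddc m) m) (le_ciInf fun n => ?_)
    have := hkey m n
    linarith
  have hbddf : ∀ x, BddAbove (Set.range fun m => ⟪q m, x⟫ + c m) :=
    fun x => Set.Finite.bddAbove (Set.finite_range _)
  -- f agrees with ρ at net points
  have hfnet : ∀ k, f (ξ k) = ρ (ξ k) := by
    intro k
    refine le_antisymm (ciSup_le fun m => ?_) ?_
    · have h1 : c m ≤ ρ (ξ k) - ⟪q m, ξ k⟫ := ciInf_le (hbddc m) k
      linarith
    · have h1 : ⟪q k, ξ k⟫ + c k ≤ f (ξ k) := le_ciSup (hbddf (ξ k)) k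
      rw [hceq k] at h1
      linarith
  -- convexity of f
  have hfconv : ∀ x z : H, ∀ s : ℝ, 0 ≤ s → s ≤ 1 →
      f (s • x + (1 - s) • z) ≤ s * f x + (1 - s) * f z := by
    intro x z s hs0 hs1
    refine ciSup_le fun m => ?_
    have h1 : ⟪q m, s • x + (1 - s) • z⟫ = s * ⟪q m, x⟫ + (1 - s) * ⟪q m, z⟫ := by
      rw [inner_add_right, real_inner_smul_right, real_inner_smul_right]
    have h2 : ⟪q m, x⟫ + c m ≤ f x := le_ciSup (hbddf x) m
    have h3 : ⟪q m, z⟫ + c m ≤ f z := le_ciSup (hbddf z) m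
    have h4 := mul_le_mul_of_nonneg_left h2 hs0
    have h5 := mul_le_mul_of_nonneg_left h3 (by linarith : (0:ℝ) ≤ 1 - s)
    rw [h1]
    nlinarith
  -- Lipschitz property of f
  have hflip : ∀ x z : H, |f x - f z| ≤ L * ‖x - z‖ := by
    have half : ∀ x z : H, f x ≤ f z + L * ‖x - z‖ := by
      intro x z
      refine ciSup_le fun m => ?_
      have h1 : ⟪q m, x⟫ = ⟪q m, z⟫ + ⟪q m, x - z⟫ := by
        rw [inner_sub_right]; ring
      have h2 : ⟪q m, x - z⟫ ≤ ‖q m‖ * ‖x - z‖ := real_inner_le_norm _ _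
      have h3 : ‖q m‖ * ‖x - z‖ ≤ L * ‖x - z‖ :=
        mul_le_mul_of_nonneg_right (hqnorm m) (norm_nonneg _)
      have h4 : ⟪q m, z⟫ + c m ≤ f z := le_ciSup (hbddf z) m
      linarith
    intro x z
    rw [abs_sub_le_iff]
    constructor
    · linarith [half x z]
    · rw [norm_sub_rev]; linarith [half z x]
  -- approximation on C
  have happrox : ∀ x ∈ C, |ρ x - f x| ≤ ε / 2 := by
    intro x hx
    obtain ⟨n, hn⟩ := hξnet x hx
    have h1 : |ρ x - ρ (ξ n)| ≤ L * ‖x - ξ n‖ := hρlip x hx _ (hξC n)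
    have h2 : |f (ξ n) - f x| ≤ L * ‖ξ n - x‖ := hflip _ _
    have h3 : ‖ξ n - x‖ = ‖x - ξ n‖ := norm_sub_rev _ _
    have h4 : L * ‖x - ξ n‖ ≤ L * δ := mul_le_mul_of_nonneg_left hn.le hL.le
    have h5 : |ρ x - f x| ≤ |ρ x - ρ (ξ n)| + |f (ξ n) - f x| := by
      have := abs_add_le (ρ x - ρ (ξ n)) (f (ξ n) - f x)
      have heq2 : ρ x - ρ (ξ n) + (f (ξ n) - f x) = ρ x - f x := by
        rw [hfnet n]; ring
      rw [heq2] at this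
      exact this
    have h6 : L * δ = ε / 4 := by
      rw [hδ]; field_simp
    rw [h3] at h2
    linarith
  -- assemble
  refine ⟨N, N, ξ, V, hVfd, q, f, hNpos, hNpos, hξC, fun m => ⟨hqV m, hqnorm m⟩,
    fun x => rfl, hfconv, hflip, ?_⟩
  have h1 : sSup ((fun x => |ρ x - f x|) '' C) ≤ ε / 2 := by
    refine Real.sSup_le ?_ (by linarith)
    rintro v ⟨x, hx, rfl⟩
    exact happrox x hx
  linarith
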